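/- Let m ≥ 1 and δ > 0, and let ℋ denote the set of linear subspaces of ℝ^m. There exists a function C : ℋ × ℝ^m × ℝ^m → Mat(ℝ^m, ℝ^m) such that for every subspace H ∈ ℋ and all v, u ∈ ℝ^m: (1) C(H,v,u) is symmetric positive semidefinite, its image is contained in H, it is positive definite when restricted to H (i.e., ⟨w, C(H,v,u) w⟩ > 0 for every nonzero w ∈ H), and C(H,v,u) ⪯ P_H where P_H is the orthogonal projection onto H; (2) for each fixed H, the map (v,u) ↦ C(H,v,u) is locally Lipschitz; (3) Tr(C(H,v,u)) ≥ dim(H) − 2; (4) ‖C(H,v,u) v‖ ≤ δ and ‖C(H,v,u) u‖ ≤ δ. -/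

import Mathlib

noncomputable section

open scoped RealInnerProductSpace

/-- The orthogonal projection onto a subspace `H`, as a continuous linear map on the
ambient space. -/
def projCLM {m : ℕ} (H : Submodule ℝ (EuclideanSpace ℝ (Fin m))) :
    EuclideanSpace ℝ (Fin m) →L[ℝ] EuclideanSpace ℝ (Fin m) :=
  H.subtypeL.comp (H.orthogonalProjectionOnto)

namespace SmoothedProjAux

variable {m : ℕ} {H : Submodule ℝ (EuclideanSpace ℝ (Fin m))}

lemma proj_mem (w : EuclideanSpace ℝ (Fin m)) : projCLM H w ∈ H := (H.orthogonalProjectionOnto w).2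

lemma proj_eq_self {w : EuclideanSpace ℝ (Fin m)} (hw : w ∈ H) : projCLM H w = w :=
  H.starProjection_eq_self_iff.mpr hw

lemma proj_symm (w w' : EuclideanSpace ℝ (Fin m)) :
    ⟪projCLM H w, w'⟫ = ⟪w, projCLM H w'⟫ :=
  H.inner_starProjection_left_eq_right w w'

lemma proj_norm_le (w : EuclideanSpace ℝ (Fin m)) : ‖projCLM H w‖ ≤ ‖w‖ := by
  have h1 : ‖projCLM H w‖ = ‖H.orthogonalProjectionOnto w‖ := rfl
  calc ‖projCLM H w‖ ≤ ‖(H.orthogonalProjectionOnto : _ →L[ℝ] H)‖ * ‖w‖ := by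
        rw [h1]; exact (H.orthogonalProjectionOnto).le_opNorm w
    _ ≤ 1 * ‖w‖ := mul_le_mul_of_nonneg_right (H.orthogonalProjectionOnto_norm_le) (norm_nonneg w)
    _ = ‖w‖ := one_mul _

lemma proj_inner_self (w : EuclideanSpace ℝ (Fin m)) :
    ⟪projCLM H w, w⟫ = ‖projCLM H w‖ ^ 2 := by
  calc ⟪projCLM H w, w⟫ = ⟪projCLM H (projCLM H w), w⟫ :=
        (congrArg (fun t => (inner ℝ t w : ℝ)) (proj_eq_self (proj_mem w))).symm
    _ = ⟪projCLM H w, projCLM H w⟫ := proj_symm (projCLM H w) w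
    _ = ‖projCLM H w‖ ^ 2 := real_inner_self_eq_norm_sq _

lemma trace_rankOne (y x : EuclideanSpace ℝ (Fin m)) :
    LinearMap.trace ℝ (EuclideanSpace ℝ (Fin m))
      (((innerSL ℝ y).smulRight x : EuclideanSpace ℝ (Fin m) →L[ℝ] EuclideanSpace ℝ (Fin m)) :
        EuclideanSpace ℝ (Fin m) →ₗ[ℝ] EuclideanSpace ℝ (Fin m)) = ⟪y, x⟫ := by
  have h : (((innerSL ℝ y).smulRight x : EuclideanSpace ℝ (Fin m) →L[ℝ] _) :
      EuclideanSpace ℝ (Fin m) →ₗ[ℝ] EuclideanSpace ℝ (Fin m))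
      = (LinearMap.toSpanSingleton ℝ _ x) ∘ₗ ((innerSL ℝ y : _ →L[ℝ] ℝ) :
        EuclideanSpace ℝ (Fin m) →ₗ[ℝ] ℝ) := by
    ext w; rfl
  rw [h, LinearMap.trace_comp_comm']
  have h2 : ((innerSL ℝ y : _ →L[ℝ] ℝ) : EuclideanSpace ℝ (Fin m) →ₗ[ℝ] ℝ) ∘ₗ
      LinearMap.toSpanSingleton ℝ (EuclideanSpace ℝ (Fin m)) x = ⟪y, x⟫ • LinearMap.id := by
    apply LinearMap.ext_ring
    simp [LinearMap.toSpanSingleton, real_inner_smul_right]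
  rw [h2, map_smul, LinearMap.trace_id]
  simp

/-- rank-one symmetric operator `w ↦ ⟪a,w⟫ • a`. -/
def rk1 (a : EuclideanSpace ℝ (Fin m)) :
    EuclideanSpace ℝ (Fin m) →L[ℝ] EuclideanSpace ℝ (Fin m) :=
  (innerSL ℝ a).smulRight a

/-- The operator `1 + l (a aᵀ + b bᵀ)`. -/
def Tmap (l : ℝ) (a b : EuclideanSpace ℝ (Fin m)) :
    EuclideanSpace ℝ (Fin m) →L[ℝ] EuclideanSpace ℝ (Fin m) :=
  1 + l • (rk1 a + rk1 b)

lemma Tmap_apply (l : ℝ) (a b x : EuclideanSpace ℝ (Fin m)) :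
    Tmap l a b x = x + l • (⟪a, x⟫ • a + ⟪b, x⟫ • b) := rfl

lemma inner_Tmap_self (l : ℝ) (a b x : EuclideanSpace ℝ (Fin m)) :
    ⟪x, Tmap l a b x⟫ = ‖x‖ ^ 2 + l * ⟪a, x⟫ ^ 2 + l * ⟪b, x⟫ ^ 2 := by
  simp only [Tmap_apply, inner_add_right, real_inner_smul_right, real_inner_self_eq_norm_sq]
  rw [real_inner_comm x a, real_inner_comm x b]
  ring

lemma Tmap_symm (l : ℝ) (a b x y : EuclideanSpace ℝ (Fin m)) :
    ⟪Tmap l a b x, y⟫ = ⟪x, Tmap l a b y⟫ := by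
  simp only [Tmap_apply, inner_add_right, inner_add_left, real_inner_smul_right,
    real_inner_smul_left]
  rw [real_inner_comm x a, real_inner_comm x b]
  ring

lemma Tmap_isUnit {l : ℝ} (hl : 0 ≤ l) (a b : EuclideanSpace ℝ (Fin m)) :
    IsUnit (Tmap l a b) := by
  rw [ContinuousLinearMap.isUnit_iff_bijective]
  have hinj : Function.Injective (Tmap l a b) := by
    intro x y hxy
    have h0 : Tmap l a b (x - y) = 0 := by rw [map_sub, hxy, sub_self]
    have h1 : (0 : ℝ) = ‖x - y‖ ^ 2 + l * ⟪a, x - y⟫ ^ 2 + l * ⟪b, x - y⟫ ^ 2 := by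
      rw [← inner_Tmap_self, h0, inner_zero_right]
    have hA : 0 ≤ l * ⟪a, x - y⟫ ^ 2 := mul_nonneg hl (sq_nonneg _)
    have hB : 0 ≤ l * ⟪b, x - y⟫ ^ 2 := mul_nonneg hl (sq_nonneg _)
    have h2 : ‖x - y‖ = 0 := by nlinarith [norm_nonneg (x - y)]
    exact sub_eq_zero.mp (norm_eq_zero.mp h2)
  exact ⟨hinj, LinearMap.injective_iff_surjective.mp hinj⟩

/-- The inverse operator `B = T⁻¹`. -/
def Bmap (l : ℝ) (a b : EuclideanSpace ℝ (Fin m)) :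
    EuclideanSpace ℝ (Fin m) →L[ℝ] EuclideanSpace ℝ (Fin m) :=
  Ring.inverse (Tmap l a b)

section Binv
variable {l : ℝ} (a b : EuclideanSpace ℝ (Fin m))

lemma Tmap_Bmap (hl : 0 ≤ l) (x : EuclideanSpace ℝ (Fin m)) :
    Tmap l a b (Bmap l a b x) = x := by
  have h : Tmap l a b * Bmap l a b = 1 := Ring.mul_inverse_cancel _ (Tmap_isUnit hl a b)
  calc Tmap l a b (Bmap l a b x) = (Tmap l a b * Bmap l a b) x := rfl
    _ = x := by rw [h]; rfl

lemma Bmap_Tmap (hl : 0 ≤ l) (x : EuclideanSpace ℝ (Fin m)) :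
    Bmap l a b (Tmap l a b x) = x := by
  have h : Bmap l a b * Tmap l a b = 1 := Ring.inverse_mul_cancel _ (Tmap_isUnit hl a b)
  calc Bmap l a b (Tmap l a b x) = (Bmap l a b * Tmap l a b) x := rfl
    _ = x := by rw [h]; rfl

lemma Bmap_symm (hl : 0 ≤ l) (x y : EuclideanSpace ℝ (Fin m)) :
    ⟪Bmap l a b x, y⟫ = ⟪x, Bmap l a b y⟫ := by
  conv_lhs => rw [← Tmap_Bmap a b hl y]
  rw [← Tmap_symm, Tmap_Bmap a b hl]

lemma inner_Bmap_self_eq (hl : 0 ≤ l) (x : EuclideanSpace ℝ (Fin m)) :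
    ⟪Bmap l a b x, x⟫ = ‖Bmap l a b x‖ ^ 2 + l * ⟪a, Bmap l a b x⟫ ^ 2
      + l * ⟪b, Bmap l a b x⟫ ^ 2 := by
  calc ⟪Bmap l a b x, x⟫ = ⟪Bmap l a b x, Tmap l a b (Bmap l a b x)⟫ :=
        congrArg (fun t => (inner ℝ (Bmap l a b x) t : ℝ)) (Tmap_Bmap a b hl x).symm
    _ = _ := inner_Tmap_self l a b (Bmap l a b x)

lemma inner_Bmap_self_nonneg (hl : 0 ≤ l) (x : EuclideanSpace ℝ (Fin m)) :
    0 ≤ ⟪Bmap l a b x, x⟫ := by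
  rw [inner_Bmap_self_eq a b hl x]
  have h1 := mul_nonneg hl (sq_nonneg ⟪a, Bmap l a b x⟫)
  have h2 := mul_nonneg hl (sq_nonneg ⟪b, Bmap l a b x⟫)
  nlinarith [sq_nonneg ‖Bmap l a b x‖]

lemma inner_Bmap_self_pos (hl : 0 ≤ l) {x : EuclideanSpace ℝ (Fin m)} (hx : x ≠ 0) :
    0 < ⟪Bmap l a b x, x⟫ := by
  have hzne : Bmap l a b x ≠ 0 := by
    intro h
    apply hx
    rw [← Tmap_Bmap a b hl x, h, map_zero]
  have hn : 0 < ‖Bmap l a b x‖ ^ 2 := pow_pos (norm_pos_iff.mpr hzne) 2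
  rw [inner_Bmap_self_eq a b hl x]
  have h1 := mul_nonneg hl (sq_nonneg ⟪a, Bmap l a b x⟫)
  have h2 := mul_nonneg hl (sq_nonneg ⟪b, Bmap l a b x⟫)
  linarith

lemma norm_sq_Bmap_le_inner (hl : 0 ≤ l) (x : EuclideanSpace ℝ (Fin m)) :
    ‖Bmap l a b x‖ ^ 2 ≤ ⟪Bmap l a b x, x⟫ := by
  rw [inner_Bmap_self_eq a b hl x]
  have h1 := mul_nonneg hl (sq_nonneg ⟪a, Bmap l a b x⟫)
  have h2 := mul_nonneg hl (sq_nonneg ⟪b, Bmap l a b x⟫)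
  linarith

lemma inner_Bmap_le (hl : 0 ≤ l) (x : EuclideanSpace ℝ (Fin m)) :
    ⟪Bmap l a b x, x⟫ ≤ ‖x‖ ^ 2 := by
  have h1 := norm_sq_Bmap_le_inner a b hl x
  have h2 : ⟪Bmap l a b x, x⟫ ≤ ‖Bmap l a b x‖ * ‖x‖ := real_inner_le_norm _ x
  have h3 : ‖Bmap l a b x‖ ≤ ‖x‖ := by
    nlinarith [norm_nonneg (Bmap l a b x), norm_nonneg x]
  calc ⟪Bmap l a b x, x⟫ ≤ ‖Bmap l a b x‖ * ‖x‖ := h2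
    _ ≤ ‖x‖ * ‖x‖ := mul_le_mul_of_nonneg_right h3 (norm_nonneg x)
    _ = ‖x‖ ^ 2 := (sq ‖x‖).symm

lemma inner_Bmap_a_le (hl' : 0 < l) : ⟪Bmap l a b a, a⟫ ≤ 1 / l := by
  have hl : 0 ≤ l := hl'.le
  have h1 := inner_Bmap_self_eq a b hl a
  have hb := mul_nonneg hl (sq_nonneg ⟪b, Bmap l a b a⟫)
  have hcomm : ⟪a, Bmap l a b a⟫ = ⟪Bmap l a b a, a⟫ := real_inner_comm _ _
  have hsq : ⟪a, Bmap l a b a⟫ ^ 2 = ⟪Bmap l a b a, a⟫ ^ 2 := by rw [hcomm]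
  have hs : l * ⟪Bmap l a b a, a⟫ ^ 2 ≤ ⟪Bmap l a b a, a⟫ := by
    nlinarith [sq_nonneg ‖Bmap l a b a‖, hcomm, hsq, h1, hb]
  rw [le_div_iff₀ hl']
  nlinarith [hs, sq_nonneg (l * ⟪Bmap l a b a, a⟫ - 1),
    mul_le_mul_of_nonneg_left hs hl]

lemma norm_sq_Bmap_a_le (hl' : 0 < l) : ‖Bmap l a b a‖ ^ 2 ≤ 1 / l :=
  le_trans (norm_sq_Bmap_le_inner a b hl'.le a) (inner_Bmap_a_le a b hl')

lemma inner_Bmap_b_le (hl' : 0 < l) : ⟪Bmap l a b b, b⟫ ≤ 1 / l := by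
  have hl : 0 ≤ l := hl'.le
  have h1 := inner_Bmap_self_eq a b hl b
  have ha := mul_nonneg hl (sq_nonneg ⟪a, Bmap l a b b⟫)
  have hcomm : ⟪b, Bmap l a b b⟫ = ⟪Bmap l a b b, b⟫ := real_inner_comm _ _
  have hsq : ⟪b, Bmap l a b b⟫ ^ 2 = ⟪Bmap l a b b, b⟫ ^ 2 := by rw [hcomm]
  have hs : l * ⟪Bmap l a b b, b⟫ ^ 2 ≤ ⟪Bmap l a b b, b⟫ := by
    nlinarith [sq_nonneg ‖Bmap l a b b‖, hcomm, hsq, h1, ha]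
  rw [le_div_iff₀ hl']
  nlinarith [hs, sq_nonneg (l * ⟪Bmap l a b b, b⟫ - 1),
    mul_le_mul_of_nonneg_left hs hl]

lemma norm_sq_Bmap_b_le (hl' : 0 < l) : ‖Bmap l a b b‖ ^ 2 ≤ 1 / l :=
  le_trans (norm_sq_Bmap_le_inner a b hl'.le b) (inner_Bmap_b_le a b hl')

lemma Bmap_formula (hl : 0 ≤ l) (z : EuclideanSpace ℝ (Fin m)) :
    Bmap l a b z = z - (l * ⟪a, z⟫) • Bmap l a b a - (l * ⟪b, z⟫) • Bmap l a b b := by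
  have key : Tmap l a b (z - (l * ⟪a, z⟫) • Bmap l a b a - (l * ⟪b, z⟫) • Bmap l a b b)
      = Tmap l a b z - (l * ⟪a, z⟫) • a - (l * ⟪b, z⟫) • b := by
    rw [map_sub, map_sub, map_smul, map_smul, Tmap_Bmap a b hl, Tmap_Bmap a b hl]
  have hTz : Tmap l a b z - (l * ⟪a, z⟫) • a - (l * ⟪b, z⟫) • b = z := by
    show z + l • (⟪a, z⟫ • a + ⟪b, z⟫ • b) - _ - _ = z
    rw [smul_add, smul_smul, smul_smul]
    abel
  conv_lhs => rw [← hTz, ← key, Bmap_Tmap a b hl]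
end Binv

/-- The smoothed projection operator. -/
def Cmap (H : Submodule ℝ (EuclideanSpace ℝ (Fin m))) (l : ℝ)
    (v u : EuclideanSpace ℝ (Fin m)) :
    EuclideanSpace ℝ (Fin m) →L[ℝ] EuclideanSpace ℝ (Fin m) :=
  (projCLM H).comp ((Bmap l (projCLM H v) (projCLM H u)).comp (projCLM H))

section CmapLemmas
variable {l : ℝ} (v u : EuclideanSpace ℝ (Fin m))

lemma Cmap_formula (hl : 0 ≤ l) :
    Cmap H l v u = projCLM H
      - l • ((innerSL ℝ (projCLM H v)).smulRight
          (projCLM H (Bmap l (projCLM H v) (projCLM H u) (projCLM H v))))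
      - l • ((innerSL ℝ (projCLM H u)).smulRight
          (projCLM H (Bmap l (projCLM H v) (projCLM H u) (projCLM H u)))) := by
  set a := projCLM H v with ha
  set b := projCLM H u with hb
  refine ContinuousLinearMap.ext fun w => ?_
  have hPP : projCLM H (projCLM H w) = projCLM H w := proj_eq_self (proj_mem w)
  have haw : ⟪a, projCLM H w⟫ = ⟪a, w⟫ := by
    rw [← proj_symm a w, proj_eq_self (proj_mem v)]
  have hbw : ⟪b, projCLM H w⟫ = ⟪b, w⟫ := by
    rw [← proj_symm b w, proj_eq_self (proj_mem u)]
  show projCLM H (Bmap l a b (projCLM H w)) = _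
  rw [Bmap_formula a b hl (projCLM H w), map_sub, map_sub, map_smul, map_smul, hPP, haw, hbw]
  simp only [ContinuousLinearMap.sub_apply, ContinuousLinearMap.smul_apply,
    ContinuousLinearMap.smulRight_apply, coe_innerSL_apply, innerSL_apply_apply]
  rw [mul_smul, mul_smul]
end CmapLemmas

end SmoothedProjAux

open SmoothedProjAux in
/-- **Existence of the smoothed two-direction projection** -/
theorem smoothed_projection_exists (m : ℕ) (hm : 1 ≤ m) (δ : ℝ) (hδ : 0 < δ) :
    ∃ C : Submodule ℝ (EuclideanSpace ℝ (Fin m)) → EuclideanSpace ℝ (Fin m) →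
        EuclideanSpace ℝ (Fin m) →
        (EuclideanSpace ℝ (Fin m) →L[ℝ] EuclideanSpace ℝ (Fin m)),
      ∀ (H : Submodule ℝ (EuclideanSpace ℝ (Fin m))) (v u : EuclideanSpace ℝ (Fin m)),
        (∀ w w', ⟪C H v u w, w'⟫ = ⟪w, C H v u w'⟫) ∧
        (∀ w, 0 ≤ ⟪C H v u w, w⟫) ∧
        (∀ w, C H v u w ∈ H) ∧
        (∀ w ∈ H, w ≠ 0 → 0 < ⟪C H v u w, w⟫) ∧
        (∀ w, ⟪C H v u w, w⟫ ≤ ⟪projCLM H w, w⟫) ∧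
        LocallyLipschitz
          (fun p : EuclideanSpace ℝ (Fin m) × EuclideanSpace ℝ (Fin m) => C H p.1 p.2) ∧
        ((Module.finrank ℝ H : ℝ) - 2 ≤
          LinearMap.trace ℝ (EuclideanSpace ℝ (Fin m)) (C H v u : _ →ₗ[ℝ] _)) ∧
        ‖C H v u v‖ ≤ δ ∧ ‖C H v u u‖ ≤ δ := by
  set l : ℝ := δ⁻¹ * δ⁻¹ with hldef
  have hl' : 0 < l := by positivity
  have hl : 0 ≤ l := hl'.le
  refine ⟨fun H v u => Cmap H l v u, fun H v u => ?_⟩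
  set a := projCLM H v with hadef
  set b := projCLM H u with hbdef
  have hCapp : ∀ w, Cmap H l v u w = projCLM H (Bmap l a b (projCLM H w)) := fun w => rfl
  refine ⟨?_, ?_, ?_, ?_, ?_, ?_, ?_, ?_, ?_⟩
  · -- symmetry
    intro w w'
    rw [hCapp w, hCapp w']
    calc ⟪projCLM H (Bmap l a b (projCLM H w)), w'⟫
        = ⟪Bmap l a b (projCLM H w), projCLM H w'⟫ := proj_symm _ _
      _ = ⟪projCLM H w, Bmap l a b (projCLM H w')⟫ := Bmap_symm a b hl _ _
      _ = ⟪w, projCLM H (Bmap l a b (projCLM H w'))⟫ := proj_symm _ _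
  · -- PSD
    intro w
    rw [hCapp w, proj_symm]
    exact inner_Bmap_self_nonneg a b hl _
  · -- membership
    intro w
    rw [hCapp w]
    exact proj_mem _
  · -- strict positivity on H
    intro w hw hwne
    rw [hCapp w, proj_eq_self hw, proj_symm, proj_eq_self hw]
    exact inner_Bmap_self_pos a b hl hwne
  · -- dominated by projection
    intro w
    rw [hCapp w, proj_symm]
    have h1 : ⟪Bmap l a b (projCLM H w), projCLM H w⟫ ≤ ‖projCLM H w‖ ^ 2 :=
      inner_Bmap_le a b hl _
    have h2 : ⟪projCLM H w, w⟫ = ‖projCLM H w‖ ^ 2 := proj_inner_self w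
    exact h1.trans h2.ge
  · -- locally Lipschitz
    have h1 : ContDiff ℝ 1 (fun q : (EuclideanSpace ℝ (Fin m) →L[ℝ] ℝ) ×
        EuclideanSpace ℝ (Fin m) => q.1.smulRight q.2) :=
      isBoundedBilinearMap_smulRight.contDiff
    have hPhi : ContDiff ℝ 1 (fun x : EuclideanSpace ℝ (Fin m) => rk1 x) :=
      h1.comp (ContDiff.prodMk (innerSL ℝ).contDiff contDiff_id)
    have hT : ContDiff ℝ 1 (fun p : EuclideanSpace ℝ (Fin m) × EuclideanSpace ℝ (Fin m) =>
        Tmap l (projCLM H p.1) (projCLM H p.2)) := by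
      unfold Tmap
      exact contDiff_const.add
        (((hPhi.comp (ContDiff.comp (projCLM H).contDiff contDiff_fst)).add
          (hPhi.comp (ContDiff.comp (projCLM H).contDiff contDiff_snd))).const_smul l)
    intro p
    have hu := Tmap_isUnit hl (projCLM H p.1) (projCLM H p.2)
    have hinv : ContDiffAt ℝ 1 Ring.inverse (Tmap l (projCLM H p.1) (projCLM H p.2)) :=
      hu.unit_spec ▸ contDiffAt_ringInverse ℝ hu.unit
    have hB : ContDiffAt ℝ 1 (fun p : EuclideanSpace ℝ (Fin m) × EuclideanSpace ℝ (Fin m) =>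
        Bmap l (projCLM H p.1) (projCLM H p.2)) p :=
      ContDiffAt.comp p hinv hT.contDiffAt
    have hC : ContDiffAt ℝ 1 (fun p : EuclideanSpace ℝ (Fin m) × EuclideanSpace ℝ (Fin m) =>
        Cmap H l p.1 p.2) p :=
      contDiffAt_const.clm_comp (hB.clm_comp contDiffAt_const)
    exact hC.exists_lipschitzOnWith
  · -- trace bound
    have hform := Cmap_formula (H := H) v u hl
    rw [← hadef, ← hbdef] at hform
    show (Module.finrank ℝ H : ℝ) - 2 ≤ LinearMap.trace ℝ (EuclideanSpace ℝ (Fin m))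
      ((Cmap H l v u : EuclideanSpace ℝ (Fin m) →L[ℝ] EuclideanSpace ℝ (Fin m)) :
        EuclideanSpace ℝ (Fin m) →ₗ[ℝ] EuclideanSpace ℝ (Fin m))
    rw [hform]
    have hcoe : (((projCLM H
        - l • ((innerSL ℝ a).smulRight (projCLM H (Bmap l a b a)))
        - l • ((innerSL ℝ b).smulRight (projCLM H (Bmap l a b b)))) :
          EuclideanSpace ℝ (Fin m) →L[ℝ] EuclideanSpace ℝ (Fin m)) :
          EuclideanSpace ℝ (Fin m) →ₗ[ℝ] EuclideanSpace ℝ (Fin m))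
        = ((projCLM H : EuclideanSpace ℝ (Fin m) →L[ℝ] _) :
            EuclideanSpace ℝ (Fin m) →ₗ[ℝ] _)
          - l • (((innerSL ℝ a).smulRight (projCLM H (Bmap l a b a)) :
              EuclideanSpace ℝ (Fin m) →L[ℝ] _) : EuclideanSpace ℝ (Fin m) →ₗ[ℝ] _)
          - l • (((innerSL ℝ b).smulRight (projCLM H (Bmap l a b b)) :
              EuclideanSpace ℝ (Fin m) →L[ℝ] _) : EuclideanSpace ℝ (Fin m) →ₗ[ℝ] _) := rfl
    rw [hcoe, map_sub, map_sub, map_smul, map_smul, trace_rankOne, trace_rankOne]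
    have hproj : LinearMap.IsProj H ((projCLM H : EuclideanSpace ℝ (Fin m) →L[ℝ] _) :
        EuclideanSpace ℝ (Fin m) →ₗ[ℝ] _) :=
      ⟨fun x => proj_mem x, fun x hx => proj_eq_self hx⟩
    rw [hproj.trace]
    have hpa : ⟪a, projCLM H (Bmap l a b a)⟫ = ⟪Bmap l a b a, a⟫ := by
      rw [← proj_symm a _, proj_eq_self (proj_mem v), real_inner_comm]
    have hpb : ⟪b, projCLM H (Bmap l a b b)⟫ = ⟪Bmap l a b b, b⟫ := by
      rw [← proj_symm b _, proj_eq_self (proj_mem u), real_inner_comm]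
    rw [hpa, hpb]
    have h1 : l * ⟪Bmap l a b a, a⟫ ≤ 1 := by
      have := inner_Bmap_a_le a b hl'
      calc l * ⟪Bmap l a b a, a⟫ ≤ l * (1 / l) := mul_le_mul_of_nonneg_left this hl
        _ = 1 := by field_simp
    have h2 : l * ⟪Bmap l a b b, b⟫ ≤ 1 := by
      have := inner_Bmap_b_le a b hl'
      calc l * ⟪Bmap l a b b, b⟫ ≤ l * (1 / l) := mul_le_mul_of_nonneg_left this hl
        _ = 1 := by field_simp
    simp only [smul_eq_mul]
    linarith
  · -- norm bound for v
    have : Cmap H l v u v = projCLM H (Bmap l a b a) := rfl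
    rw [this]
    have h1 : ‖projCLM H (Bmap l a b a)‖ ≤ ‖Bmap l a b a‖ := proj_norm_le _
    have h2 : ‖Bmap l a b a‖ ^ 2 ≤ 1 / l := norm_sq_Bmap_a_le a b hl'
    have h3 : (1 : ℝ) / l = δ * δ := by rw [hldef]; field_simp
    nlinarith [norm_nonneg (Bmap l a b a), norm_nonneg (projCLM H (Bmap l a b a))]
  · -- norm bound for u
    have : Cmap H l v u u = projCLM H (Bmap l a b b) := rfl
    rw [this]
    have h1 : ‖projCLM H (Bmap l a b b)‖ ≤ ‖Bmap l a b b‖ := proj_norm_le _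
    have h2 : ‖Bmap l a b b‖ ^ 2 ≤ 1 / l := norm_sq_Bmap_b_le a b hl'
    have h3 : (1 : ℝ) / l = δ * δ := by rw [hldef]; field_simp
    nlinarith [norm_nonneg (Bmap l a b b), norm_nonneg (projCLM H (Bmap l a b b))]
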